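/- Let ρ and σ be density operators on a finite-dimensional complex Hilbert space. Then the quantum relative entropy satisfies D(ρ‖σ) ≥ tr((ρ − 9σ)₊), where (X)₊ denotes the positive part of X. -/

import Mathlib

open Matrix
open scoped ComplexOrder Classical

/-- Functional calculus for Hermitian matrices via the spectral theorem
(junk value `0` for non-Hermitian input). -/
noncomputable def matFun {n : ℕ} (f : ℝ → ℝ) (A : Matrix (Fin n) (Fin n) ℂ) :
    Matrix (Fin n) (Fin n) ℂ :=
  if h : A.IsHermitian then
    (h.eigenvectorUnitary : Matrix (Fin n) (Fin n) ℂ) *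
      diagonal (fun i => (f (h.eigenvalues i) : ℂ)) *
      (star (h.eigenvectorUnitary : Matrix (Fin n) (Fin n) ℂ))
  else 0

/-- Base-2 matrix logarithm on the support (`log₂ 0 := 0` on the kernel, which is
Mathlib's convention `Real.logb 2 0 = 0`). -/
noncomputable def matLog {n : ℕ} (A : Matrix (Fin n) (Fin n) ℂ) :
    Matrix (Fin n) (Fin n) ℂ :=
  matFun (Real.logb 2) A

/-- The trace of the positive part of a Hermitian matrix: the sum of its
nonnegative eigenvalues. -/
noncomputable def posPartTrace {n : ℕ} (A : Matrix (Fin n) (Fin n) ℂ) : ℝ :=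
  if h : A.IsHermitian then ∑ i, max (h.eigenvalues i) 0 else 0

/-- Quantum relative entropy `D(ρ‖σ) = tr(ρ(log₂ρ − log₂σ))` (base 2), valued in
`EReal`; it is `+∞` unless `supp(ρ) ⊆ supp(σ)` (expressed as kernel containment
`ker σ ⊆ ker ρ`, equivalent for positive semidefinite matrices). -/

noncomputable def qRelEnt {n : ℕ} (ρ σ : Matrix (Fin n) (Fin n) ℂ) : EReal :=
  if ∀ v : Fin n → ℂ, σ *ᵥ v = 0 → ρ *ᵥ v = 0 then
    (((ρ * (matLog ρ - matLog σ)).trace.re : ℝ) : EReal)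
  else ⊤

section Helpers
variable {n : ℕ}

-- (helpers pasted below by script)



lemma traceL1 (x y : Fin n → ℝ) (M : Matrix (Fin n) (Fin n) ℂ) :
    ((diagonal (fun i => (x i : ℂ)) * M * diagonal (fun j => (y j : ℂ)) * Mᴴ).trace)
      = ((∑ i, ∑ j, x i * y j * Complex.normSq (M i j) : ℝ) : ℂ) := by
  have h : ∀ k l : Fin n,
      (diagonal (fun i => (x i : ℂ)) * M * diagonal (fun j => (y j : ℂ))) k l
        = (x k : ℂ) * M k l * (y l : ℂ) := by
    intro k l
    rw [Matrix.mul_diagonal, Matrix.mul_apply]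
    rw [Finset.sum_eq_single k]
    · simp [Matrix.diagonal_apply]
    · intro b _ hb; simp [Matrix.diagonal_apply, Ne.symm hb]
    · simp
  simp only [Matrix.trace, Matrix.diag_apply, Matrix.mul_apply, h, Matrix.conjTranspose_apply]
  push_cast
  refine Finset.sum_congr rfl fun i _ => ?_
  refine Finset.sum_congr rfl fun j _ => ?_
  rw [show ((Complex.normSq (M i j) : ℝ) : ℂ) = M i j * star (M i j) from (Complex.mul_conj _).symm]
  ring

lemma trace_conj_pair (x y : Fin n → ℝ) (U V : Matrix (Fin n) (Fin n) ℂ) :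
    (U * diagonal (fun i => (x i : ℂ)) * Uᴴ * (V * diagonal (fun j => (y j : ℂ)) * Vᴴ)).trace
      = ((∑ i, ∑ j, x i * y j * Complex.normSq ((Uᴴ * V) i j) : ℝ) : ℂ) := by
  rw [← traceL1 x y (Uᴴ * V)]
  simp only [Matrix.mul_assoc]
  rw [Matrix.trace_mul_comm]
  simp only [Matrix.conjTranspose_mul, Matrix.conjTranspose_conjTranspose, Matrix.mul_assoc]

lemma sum_normSq_col {N : Matrix (Fin n) (Fin n) ℂ} (h : Nᴴ * N = 1) (j : Fin n) :
    ∑ k, Complex.normSq (N k j) = 1 := by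
  have h2 := congrArg (fun X : Matrix (Fin n) (Fin n) ℂ => (X j j).re) h
  simp only [Matrix.mul_apply, Matrix.conjTranspose_apply, Matrix.one_apply_eq, Complex.one_re] at h2
  rw [← h2, Complex.re_sum]
  refine Finset.sum_congr rfl fun k _ => ?_
  rw [show star (N k j) * N k j = ((Complex.normSq (N k j) : ℝ) : ℂ) from
    Complex.normSq_eq_conj_mul_self.symm]
  simp


lemma normSq_one_apply (i j : Fin n) :
    Complex.normSq ((1 : Matrix (Fin n) (Fin n) ℂ) i j) = if i = j then 1 else 0 := by
  by_cases h : i = j <;> simp [Matrix.one_apply, h]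

lemma trace_conj_same (x y : Fin n → ℝ) {U : Matrix (Fin n) (Fin n) ℂ} (hU : Uᴴ * U = 1) :
    (U * diagonal (fun i => (x i : ℂ)) * Uᴴ * (U * diagonal (fun j => (y j : ℂ)) * Uᴴ)).trace
      = ((∑ i, x i * y i : ℝ) : ℂ) := by
  rw [trace_conj_pair, hU]
  norm_cast
  refine Finset.sum_congr rfl fun i _ => ?_
  simp [normSq_one_apply, mul_ite, Finset.sum_ite_eq', Finset.mem_univ]

lemma trace_CS (A B : Matrix (Fin n) (Fin n) ℂ) :
    ((Aᴴ * B).trace).re ≤ Real.sqrt (((Aᴴ * A).trace).re * ((Bᴴ * B).trace).re) := by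
  have hAA : ((Aᴴ * A).trace).re = ∑ j, ∑ k, Complex.normSq (A k j) := by
    simp only [Matrix.trace, Matrix.diag_apply, Matrix.mul_apply, Matrix.conjTranspose_apply,
      Complex.re_sum]
    refine Finset.sum_congr rfl fun j _ => (Finset.sum_congr rfl fun k _ => ?_)
    rw [show star (A k j) * A k j = ((Complex.normSq (A k j) : ℝ) : ℂ) from
      Complex.normSq_eq_conj_mul_self.symm]
    simp
  have hBB : ((Bᴴ * B).trace).re = ∑ j, ∑ k, Complex.normSq (B k j) := by
    simp only [Matrix.trace, Matrix.diag_apply, Matrix.mul_apply, Matrix.conjTranspose_apply,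
      Complex.re_sum]
    refine Finset.sum_congr rfl fun j _ => (Finset.sum_congr rfl fun k _ => ?_)
    rw [show star (B k j) * B k j = ((Complex.normSq (B k j) : ℝ) : ℂ) from
      Complex.normSq_eq_conj_mul_self.symm]
    simp
  have h1 : ((Aᴴ * B).trace).re ≤ ∑ p : Fin n × Fin n, ‖A p.2 p.1‖ * ‖B p.2 p.1‖ := by
    simp only [Matrix.trace, Matrix.diag_apply, Matrix.mul_apply, Matrix.conjTranspose_apply,
      Complex.re_sum, Fintype.sum_prod_type]
    refine Finset.sum_le_sum fun j _ => Finset.sum_le_sum fun k _ => ?_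
    calc (star (A k j) * B k j).re ≤ ‖star (A k j) * B k j‖ := Complex.re_le_norm _
    _ = ‖A k j‖ * ‖B k j‖ := by
          rw [norm_mul]; simp
  refine h1.trans ?_
  have h2 := Real.sum_mul_le_sqrt_mul_sqrt (Finset.univ : Finset (Fin n × Fin n))
    (fun p => ‖A p.2 p.1‖) (fun p => ‖B p.2 p.1‖)
  refine h2.trans (le_of_eq ?_)
  rw [hAA, hBB, Real.sqrt_mul (Finset.sum_nonneg fun j _ => Finset.sum_nonneg fun k _ => Complex.normSq_nonneg _)]
  congr 1 <;>
  · rw [Fintype.sum_prod_type]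
    refine congrArg Real.sqrt ?_
    refine Finset.sum_congr rfl fun j _ => Finset.sum_congr rfl fun k _ => ?_
    rw [Complex.sq_norm]

lemma jensen_log {ι : Type*} [Fintype ι] (w x : ι → ℝ) (hw : ∀ i, 0 ≤ w i)
    (hx : ∀ i, 0 ≤ x i) (hwx : ∀ i, w i ≠ 0 → 0 < x i) (hw1 : ∑ i, w i = 1) :
    ∑ i, w i * Real.log (x i) ≤ Real.log (∑ i, w i * x i) := by
  set S := ∑ i, w i * x i with hSdef
  have hterm : ∀ i, 0 ≤ w i * x i := fun i => mul_nonneg (hw i) (hx i)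
  have hS : 0 < S := by
    obtain ⟨i0, _, hi0⟩ := Finset.exists_ne_zero_of_sum_ne_zero
      (by rw [hw1]; exact one_ne_zero)
    have hxi : 0 < x i0 := hwx i0 hi0
    have hwi : 0 < w i0 := lt_of_le_of_ne (hw i0) (Ne.symm hi0)
    calc (0:ℝ) < w i0 * x i0 := mul_pos hwi hxi
    _ ≤ S := Finset.single_le_sum (fun i _ => hterm i) (Finset.mem_univ i0)
  have key : ∀ i, w i * Real.log (x i) ≤ w i * Real.log S + (w i * x i) / S - w i := by
    intro i
    by_cases hwi : w i = 0
    · simp [hwi]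
    · have hxi : 0 < x i := hwx i hwi
      have h1 : Real.log (x i / S) ≤ x i / S - 1 :=
        Real.log_le_sub_one_of_pos (div_pos hxi hS)
      rw [Real.log_div hxi.ne' hS.ne'] at h1
      have h2 : Real.log (x i) ≤ Real.log S + x i / S - 1 := by linarith
      have h3 := mul_le_mul_of_nonneg_left h2 (hw i)
      calc w i * Real.log (x i) ≤ w i * (Real.log S + x i / S - 1) := h3
      _ = w i * Real.log S + (w i * x i) / S - w i := by ring
  calc ∑ i, w i * Real.log (x i) ≤ ∑ i, (w i * Real.log S + (w i * x i) / S - w i) :=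
        Finset.sum_le_sum fun i _ => key i
  _ = (∑ i, w i) * Real.log S + S / S - ∑ i, w i := by
        rw [Finset.sum_sub_distrib, Finset.sum_add_distrib, ← Finset.sum_mul, ← Finset.sum_div]
  _ = Real.log S := by rw [hw1, div_self hS.ne']; ring



lemma conj_mul_conj {U : Matrix (Fin n) (Fin n) ℂ} (hU : Uᴴ * U = 1) (x y : Fin n → ℂ) :
    (U * diagonal x * Uᴴ) * (U * diagonal y * Uᴴ) = U * diagonal (fun i => x i * y i) * Uᴴ := by
  have h1 : (U * diagonal x * Uᴴ) * (U * diagonal y * Uᴴ)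
      = U * (diagonal x * ((Uᴴ * U) * (diagonal y * Uᴴ))) := by
    simp only [Matrix.mul_assoc]
  rw [h1, hU, one_mul, ← Matrix.diagonal_mul_diagonal]
  simp only [Matrix.mul_assoc]

lemma conj_ct {U : Matrix (Fin n) (Fin n) ℂ} (x : Fin n → ℝ) :
    (U * diagonal (fun i => (x i : ℂ)) * Uᴴ)ᴴ = U * diagonal (fun i => (x i : ℂ)) * Uᴴ := by
  simp only [Matrix.conjTranspose_mul, Matrix.conjTranspose_conjTranspose,
    Matrix.diagonal_conjTranspose]
  have : (star fun i => ((x i : ℝ) : ℂ)) = fun i => ((x i : ℝ) : ℂ) := by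
    funext i
    simp [Pi.star_apply, Complex.conj_ofReal]
  rw [this, Matrix.mul_assoc]

lemma sum_normSq_row {N : Matrix (Fin n) (Fin n) ℂ} (h : N * Nᴴ = 1) (k : Fin n) :
    ∑ j, Complex.normSq (N k j) = 1 := by
  have h' : (Nᴴ)ᴴ * Nᴴ = 1 := by rwa [Matrix.conjTranspose_conjTranspose]
  have := sum_normSq_col h' k
  simpa [Matrix.conjTranspose_apply, Complex.normSq_conj] using this

lemma trace_conj_spect {U : Matrix (Fin n) (Fin n) ℂ} (hU : Uᴴ * U = 1) (x : Fin n → ℝ) :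
    (U * diagonal (fun i => (x i : ℝ) : Fin n → ℂ) * Uᴴ).trace = ((∑ i, x i : ℝ) : ℂ) := by
  rw [Matrix.trace_mul_comm, ← Matrix.mul_assoc, hU, one_mul, Matrix.trace_diagonal]
  push_cast
  rfl

end Helpers

set_option maxHeartbeats 2000000 in
/-- For density operators `ρ, σ`, the quantum relative entropy satisfies
`D(ρ‖σ) ≥ tr((ρ − 9σ)₊)`. -/
theorem qRelEnt_ge_posPartTrace {n : ℕ} (ρ σ : Matrix (Fin n) (Fin n) ℂ)
    (hρ : ρ.PosSemidef) (hρ1 : ρ.trace = 1)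
    (hσ : σ.PosSemidef) (hσ1 : σ.trace = 1) :
    ((posPartTrace (ρ - (9 : ℂ) • σ) : ℝ) : EReal) ≤ qRelEnt ρ σ := by
  classical
  rw [qRelEnt]
  split_ifs with hsupp
  swap
  · exact le_top
  rw [EReal.coe_le_coe_iff]
  have hρ' : ρ.IsHermitian := hρ.1
  have hσ' : σ.IsHermitian := hσ.1
  have hΔ : (ρ - (9:ℂ) • σ).IsHermitian := by
    have h9 : ((9:ℂ) • σ).IsHermitian := by
      rw [Matrix.IsHermitian, Matrix.conjTranspose_smul, hσ'.eq]
      norm_num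
    exact hρ'.sub h9
  rw [posPartTrace, dif_pos hΔ]
  simp only [matLog, matFun]
  rw [dif_pos hρ', dif_pos hσ']
  simp only [Matrix.star_eq_conjTranspose]
  set r : Fin n → ℝ := hρ'.eigenvalues with hrdef
  set s : Fin n → ℝ := hσ'.eigenvalues with hsdef
  set d : Fin n → ℝ := hΔ.eigenvalues with hddef
  set U : Matrix (Fin n) (Fin n) ℂ := (hρ'.eigenvectorUnitary : Matrix (Fin n) (Fin n) ℂ) with hUdef
  set V : Matrix (Fin n) (Fin n) ℂ := (hσ'.eigenvectorUnitary : Matrix (Fin n) (Fin n) ℂ) with hVdef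
  set W : Matrix (Fin n) (Fin n) ℂ := (hΔ.eigenvectorUnitary : Matrix (Fin n) (Fin n) ℂ) with hWdef
  have hUU : Uᴴ * U = 1 := by
    rw [hUdef, ← Matrix.star_eq_conjTranspose]
    exact Unitary.coe_star_mul_self hρ'.eigenvectorUnitary
  have hUU' : U * Uᴴ = 1 := by
    rw [hUdef, ← Matrix.star_eq_conjTranspose]
    exact Unitary.coe_mul_star_self hρ'.eigenvectorUnitary
  have hVV : Vᴴ * V = 1 := by
    rw [hVdef, ← Matrix.star_eq_conjTranspose]
    exact Unitary.coe_star_mul_self hσ'.eigenvectorUnitary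
  have hVV' : V * Vᴴ = 1 := by
    rw [hVdef, ← Matrix.star_eq_conjTranspose]
    exact Unitary.coe_mul_star_self hσ'.eigenvectorUnitary
  have hWW : Wᴴ * W = 1 := by
    rw [hWdef, ← Matrix.star_eq_conjTranspose]
    exact Unitary.coe_star_mul_self hΔ.eigenvectorUnitary
  have hWW' : W * Wᴴ = 1 := by
    rw [hWdef, ← Matrix.star_eq_conjTranspose]
    exact Unitary.coe_mul_star_self hΔ.eigenvectorUnitary
  have hρspec : ρ = U * diagonal (fun i => (r i : ℂ)) * Uᴴ := by
    conv_lhs => rw [hρ'.spectral_theorem]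
    rfl
  have hσspec : σ = V * diagonal (fun j => (s j : ℂ)) * Vᴴ := by
    conv_lhs => rw [hσ'.spectral_theorem]
    rfl
  have hΔspec : ρ - (9:ℂ) • σ = W * diagonal (fun k => (d k : ℂ)) * Wᴴ := by
    conv_lhs => rw [hΔ.spectral_theorem]
    rfl
  have hr0 : ∀ i, 0 ≤ r i := fun i => hρ.eigenvalues_nonneg i
  have hs0' : ∀ j, 0 ≤ s j := fun j => hσ.eigenvalues_nonneg j
  have hsumr : ∑ i, r i = 1 := by
    have h1 : ρ.trace = ((∑ i, r i : ℝ) : ℂ) := by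
      conv_lhs => rw [hρspec]
      exact trace_conj_spect hUU r
    rw [hρ1] at h1
    exact_mod_cast h1.symm
  have hsums : ∑ j, s j = 1 := by
    have h1 : σ.trace = ((∑ j, s j : ℝ) : ℂ) := by
      conv_lhs => rw [hσspec]
      exact trace_conj_spect hVV s
    rw [hσ1] at h1
    exact_mod_cast h1.symm
  -- the positive-part indicator
  set χ : Fin n → ℝ := fun k => if 0 ≤ d k then 1 else 0 with hχdef
  have hχ0 : ∀ k, 0 ≤ χ k := fun k => by rw [hχdef]; positivity
  have hχ1 : ∀ k, χ k ≤ 1 := fun k => by simp only [hχdef]; split <;> norm_num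
  -- matrices
  set sqρ : Matrix (Fin n) (Fin n) ℂ := U * diagonal (fun i => (Real.sqrt (r i) : ℂ)) * Uᴴ
    with hsqρdef
  set sqσ : Matrix (Fin n) (Fin n) ℂ := V * diagonal (fun j => (Real.sqrt (s j) : ℂ)) * Vᴴ
    with hsqσdef
  set P : Matrix (Fin n) (Fin n) ℂ := W * diagonal (fun k => (χ k : ℂ)) * Wᴴ with hPdef
  set Q : Matrix (Fin n) (Fin n) ℂ := 1 - P with hQdef
  have hsqρ2 : sqρ * sqρ = ρ := by
    rw [hsqρdef, conj_mul_conj hUU, hρspec]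
    have he : (fun i => ((Real.sqrt (r i) : ℝ) : ℂ) * ((Real.sqrt (r i) : ℝ) : ℂ))
        = fun i => ((r i : ℝ) : ℂ) := by
      funext i
      rw [← Complex.ofReal_mul, Real.mul_self_sqrt (hr0 i)]
    rw [he]
  have hsqσ2 : sqσ * sqσ = σ := by
    rw [hsqσdef, conj_mul_conj hVV, hσspec]
    have he : (fun j => ((Real.sqrt (s j) : ℝ) : ℂ) * ((Real.sqrt (s j) : ℝ) : ℂ))
        = fun j => ((s j : ℝ) : ℂ) := by
      funext j
      rw [← Complex.ofReal_mul, Real.mul_self_sqrt (hs0' j)]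
    rw [he]
  have hP2 : P * P = P := by
    rw [hPdef, conj_mul_conj hWW]
    have he : (fun k => ((χ k : ℝ) : ℂ) * ((χ k : ℝ) : ℂ)) = fun k => ((χ k : ℝ) : ℂ) := by
      funext k
      rw [← Complex.ofReal_mul]
      congr 1
      simp only [hχdef]
      split <;> norm_num
    rw [he]
  have hPH : Pᴴ = P := conj_ct χ
  have hsqρH : sqρᴴ = sqρ := conj_ct _
  have hsqσH : sqσᴴ = sqσ := conj_ct _
  have hQH : Qᴴ = Q := by rw [hQdef, Matrix.conjTranspose_sub, Matrix.conjTranspose_one, hPH]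
  have hQ2 : Q * Q = Q := by
    rw [hQdef, sub_mul, one_mul, mul_sub, mul_one, hP2]
    abel
  -- trace formulas
  have htrPρ : (P * ρ).trace
      = ((∑ k, ∑ i, χ k * r i * Complex.normSq ((Wᴴ * U) k i) : ℝ) : ℂ) := by
    rw [hPdef]
    conv_lhs => rw [hρspec]
    exact trace_conj_pair χ r W U
  have htrPσ : (P * σ).trace
      = ((∑ k, ∑ j, χ k * s j * Complex.normSq ((Wᴴ * V) k j) : ℝ) : ℂ) := by
    rw [hPdef]
    conv_lhs => rw [hσspec]
    exact trace_conj_pair χ s W V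
  have htrT : (sqρ * sqσ).trace
      = ((∑ i, ∑ j, Real.sqrt (r i) * Real.sqrt (s j) * Complex.normSq ((Uᴴ * V) i j) : ℝ) : ℂ) := by
    rw [hsqρdef, hsqσdef]
    exact trace_conj_pair _ _ U V
  set A_ : ℝ := ∑ k, ∑ i, χ k * r i * Complex.normSq ((Wᴴ * U) k i) with hA_def
  set B_ : ℝ := ∑ k, ∑ j, χ k * s j * Complex.normSq ((Wᴴ * V) k j) with hB_def
  set T : ℝ := ∑ i, ∑ j, Real.sqrt (r i) * Real.sqrt (s j) * Complex.normSq ((Uᴴ * V) i j)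
    with hT_def
  have htrPΔ : (P * (ρ - (9:ℂ) • σ)).trace = ((∑ k, χ k * d k : ℝ) : ℂ) := by
    rw [hPdef]
    conv_lhs => rw [hΔspec]
    exact trace_conj_same χ d hWW
  have hPosSum : ∑ k, max (d k) 0 = A_ - 9 * B_ := by
    have h1 : (P * (ρ - (9:ℂ) • σ)).trace = (P * ρ).trace - (9:ℂ) * (P * σ).trace := by
      rw [mul_sub, Matrix.mul_smul, Matrix.trace_sub, Matrix.trace_smul, smul_eq_mul]
    rw [htrPΔ, htrPρ, htrPσ] at h1
    have h2 := congrArg Complex.re h1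
    simp only [Complex.ofReal_re, Complex.sub_re, Complex.mul_re, Complex.ofReal_im,
      Complex.re_ofNat, Complex.im_ofNat, mul_zero, zero_mul, sub_zero] at h2
    rw [← h2]
    refine Finset.sum_congr rfl fun k _ => ?_
    simp only [hχdef]
    rcases le_or_gt 0 (d k) with h|h
    · rw [if_pos h, max_eq_left h, one_mul]
    · rw [if_neg (not_le.mpr h), max_eq_right h.le, zero_mul]
  -- unitarity of products
  have hNUu : (Wᴴ * U)ᴴ * (Wᴴ * U) = 1 := by
    rw [Matrix.conjTranspose_mul, Matrix.conjTranspose_conjTranspose]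
    calc Uᴴ * W * (Wᴴ * U) = Uᴴ * ((W * Wᴴ) * U) := by simp only [Matrix.mul_assoc]
    _ = 1 := by rw [hWW', one_mul, hUU]
  have hNVu : (Wᴴ * V)ᴴ * (Wᴴ * V) = 1 := by
    rw [Matrix.conjTranspose_mul, Matrix.conjTranspose_conjTranspose]
    calc Vᴴ * W * (Wᴴ * V) = Vᴴ * ((W * Wᴴ) * V) := by simp only [Matrix.mul_assoc]
    _ = 1 := by rw [hWW', one_mul, hVV]
  have hMu : (Uᴴ * V)ᴴ * (Uᴴ * V) = 1 := by
    rw [Matrix.conjTranspose_mul, Matrix.conjTranspose_conjTranspose]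
    calc Vᴴ * U * (Uᴴ * V) = Vᴴ * ((U * Uᴴ) * V) := by simp only [Matrix.mul_assoc]
    _ = 1 := by rw [hUU', one_mul, hVV]
  have hMu' : (Uᴴ * V) * (Uᴴ * V)ᴴ = 1 := by
    rw [Matrix.conjTranspose_mul, Matrix.conjTranspose_conjTranspose]
    calc Uᴴ * V * (Vᴴ * U) = Uᴴ * ((V * Vᴴ) * U) := by simp only [Matrix.mul_assoc]
    _ = 1 := by rw [hVV', one_mul, hUU]
  -- bounds on A_ and B_
  have hA0 : 0 ≤ A_ := Finset.sum_nonneg fun k _ => Finset.sum_nonneg fun i _ =>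
    mul_nonneg (mul_nonneg (hχ0 k) (hr0 i)) (Complex.normSq_nonneg _)
  have hB0 : 0 ≤ B_ := Finset.sum_nonneg fun k _ => Finset.sum_nonneg fun j _ =>
    mul_nonneg (mul_nonneg (hχ0 k) (hs0' j)) (Complex.normSq_nonneg _)
  have hA1 : A_ ≤ 1 := by
    have step1 : A_ ≤ ∑ k, ∑ i, r i * Complex.normSq ((Wᴴ * U) k i) :=
      Finset.sum_le_sum fun k _ => Finset.sum_le_sum fun i _ => by
        have h1 : χ k * r i ≤ 1 * r i := mul_le_mul_of_nonneg_right (hχ1 k) (hr0 i)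
        have h2 : χ k * r i * Complex.normSq ((Wᴴ * U) k i)
            ≤ 1 * r i * Complex.normSq ((Wᴴ * U) k i) :=
          mul_le_mul_of_nonneg_right h1 (Complex.normSq_nonneg _)
        simpa using h2
    refine step1.trans ?_
    rw [Finset.sum_comm]
    refine le_of_eq ?_
    calc ∑ i, ∑ k, r i * Complex.normSq ((Wᴴ * U) k i)
        = ∑ i, r i * ∑ k, Complex.normSq ((Wᴴ * U) k i) := by
          exact Finset.sum_congr rfl fun i _ => (Finset.mul_sum _ _ _).symm
    _ = ∑ i, r i * 1 := Finset.sum_congr rfl fun i _ => by rw [sum_normSq_col hNUu i]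
    _ = 1 := by simp [hsumr]
  have hB1 : B_ ≤ 1 := by
    have step1 : B_ ≤ ∑ k, ∑ j, s j * Complex.normSq ((Wᴴ * V) k j) :=
      Finset.sum_le_sum fun k _ => Finset.sum_le_sum fun j _ => by
        have h1 : χ k * s j ≤ 1 * s j := mul_le_mul_of_nonneg_right (hχ1 k) (hs0' j)
        have h2 : χ k * s j * Complex.normSq ((Wᴴ * V) k j)
            ≤ 1 * s j * Complex.normSq ((Wᴴ * V) k j) :=
          mul_le_mul_of_nonneg_right h1 (Complex.normSq_nonneg _)
        simpa using h2
    refine step1.trans ?_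
    rw [Finset.sum_comm]
    refine le_of_eq ?_
    calc ∑ j, ∑ k, s j * Complex.normSq ((Wᴴ * V) k j)
        = ∑ j, s j * ∑ k, Complex.normSq ((Wᴴ * V) k j) := by
          exact Finset.sum_congr rfl fun j _ => (Finset.mul_sum _ _ _).symm
    _ = ∑ j, s j * 1 := Finset.sum_congr rfl fun j _ => by rw [sum_normSq_col hNVu j]
    _ = 1 := by simp [hsums]
  -- Cauchy–Schwarz blocks
  have e1 : ((sqρ * P)ᴴ * (sqσ * P)).trace = (P * (sqρ * sqσ)).trace := by
    rw [Matrix.conjTranspose_mul, hPH, hsqρH]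
    have h1 : P * sqρ * (sqσ * P) = P * (sqρ * sqσ) * P := by simp only [Matrix.mul_assoc]
    rw [h1, Matrix.trace_mul_comm, ← Matrix.mul_assoc, hP2]
  have e2 : ((sqρ * P)ᴴ * (sqρ * P)).trace = (P * ρ).trace := by
    rw [Matrix.conjTranspose_mul, hPH, hsqρH]
    have h1 : P * sqρ * (sqρ * P) = P * (sqρ * sqρ) * P := by simp only [Matrix.mul_assoc]
    rw [h1, hsqρ2, Matrix.trace_mul_comm, ← Matrix.mul_assoc, hP2]
  have e3 : ((sqσ * P)ᴴ * (sqσ * P)).trace = (P * σ).trace := by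
    rw [Matrix.conjTranspose_mul, hPH, hsqσH]
    have h1 : P * sqσ * (sqσ * P) = P * (sqσ * sqσ) * P := by simp only [Matrix.mul_assoc]
    rw [h1, hsqσ2, Matrix.trace_mul_comm, ← Matrix.mul_assoc, hP2]
  have hCS1 : ((P * (sqρ * sqσ)).trace).re ≤ Real.sqrt (A_ * B_) := by
    have h := trace_CS (sqρ * P) (sqσ * P)
    rw [e1, e2, e3, htrPρ, htrPσ] at h
    simpa using h
  have e1q : ((sqρ * Q)ᴴ * (sqσ * Q)).trace = (Q * (sqρ * sqσ)).trace := by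
    rw [Matrix.conjTranspose_mul, hQH, hsqρH]
    have h1 : Q * sqρ * (sqσ * Q) = Q * (sqρ * sqσ) * Q := by simp only [Matrix.mul_assoc]
    rw [h1, Matrix.trace_mul_comm, ← Matrix.mul_assoc, hQ2]
  have e2q : ((sqρ * Q)ᴴ * (sqρ * Q)).trace = (Q * ρ).trace := by
    rw [Matrix.conjTranspose_mul, hQH, hsqρH]
    have h1 : Q * sqρ * (sqρ * Q) = Q * (sqρ * sqρ) * Q := by simp only [Matrix.mul_assoc]
    rw [h1, hsqρ2, Matrix.trace_mul_comm, ← Matrix.mul_assoc, hQ2]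
  have e3q : ((sqσ * Q)ᴴ * (sqσ * Q)).trace = (Q * σ).trace := by
    rw [Matrix.conjTranspose_mul, hQH, hsqσH]
    have h1 : Q * sqσ * (sqσ * Q) = Q * (sqσ * sqσ) * Q := by simp only [Matrix.mul_assoc]
    rw [h1, hsqσ2, Matrix.trace_mul_comm, ← Matrix.mul_assoc, hQ2]
  have htrQρ : ((Q * ρ).trace).re = 1 - A_ := by
    rw [hQdef, Matrix.sub_mul, one_mul, Matrix.trace_sub]
    rw [Complex.sub_re, hρ1, htrPρ]
    simp
  have htrQσ : ((Q * σ).trace).re = 1 - B_ := by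
    rw [hQdef, Matrix.sub_mul, one_mul, Matrix.trace_sub]
    rw [Complex.sub_re, hσ1, htrPσ]
    simp
  have hCS2 : ((Q * (sqρ * sqσ)).trace).re ≤ Real.sqrt ((1 - A_) * (1 - B_)) := by
    have h := trace_CS (sqρ * Q) (sqσ * Q)
    rw [e1q, e2q, e3q, htrQρ, htrQσ] at h
    exact h
  have hTsplit : T = ((P * (sqρ * sqσ)).trace).re + ((Q * (sqρ * sqσ)).trace).re := by
    have h1 : (sqρ * sqσ).trace = ((P + Q) * (sqρ * sqσ)).trace := by
      rw [show P + Q = 1 by rw [hQdef]; abel, one_mul]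
    rw [Matrix.add_mul, Matrix.trace_add, htrT] at h1
    have h2 := congrArg Complex.re h1
    simpa [Complex.add_re] using h2
  have hTle : T ≤ Real.sqrt (A_ * B_) + Real.sqrt ((1 - A_) * (1 - B_)) := by
    rw [hTsplit]
    exact add_le_add hCS1 hCS2
  -- support condition
  have hsupp0 : ∀ j, s j = 0 → ∀ i, (r i : ℂ) * (Uᴴ * V) i j = 0 := by
    intro j hsj i
    have hVb : (fun k => V k j) = ⇑(hσ'.eigenvectorBasis j) := by
      funext k
      exact hσ'.eigenvectorUnitary_apply k j
    have hv : σ *ᵥ (fun k => V k j) = 0 := by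
      rw [hVb, hσ'.mulVec_eigenvectorBasis]
      rw [show hσ'.eigenvalues j = 0 from hsj]
      simp
    have hρv : ρ *ᵥ (fun k => V k j) = 0 := hsupp _ hv
    have hcol : ∀ k, (ρ * V) k j = 0 := by
      intro k
      rw [Matrix.mul_apply]
      have := congrFun hρv k
      simpa [Matrix.mulVec, dotProduct] using this
    have key : diagonal (fun i => (r i : ℂ)) * (Uᴴ * V) = Uᴴ * (ρ * V) := by
      conv_rhs => rw [hρspec]
      rw [show Uᴴ * (U * diagonal (fun i => (r i : ℂ)) * Uᴴ * V)
          = (Uᴴ * U) * (diagonal (fun i => (r i : ℂ)) * (Uᴴ * V)) from by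
        simp only [Matrix.mul_assoc], hUU, one_mul]
    have hentry := congrFun (congrFun key i) j
    rw [Matrix.diagonal_mul] at hentry
    rw [hentry, Matrix.mul_apply]
    refine Finset.sum_eq_zero fun k _ => ?_
    rw [hcol k, mul_zero]
  have hw0 : ∀ i j, s j = 0 → r i * Complex.normSq ((Uᴴ * V) i j) = 0 := by
    intro i j hsj
    rcases mul_eq_zero.mp (hsupp0 j hsj i) with h'|h'
    · rw [show r i = 0 from by exact_mod_cast h', zero_mul]
    · rw [h', map_zero, mul_zero]
  -- Jensen setup
  set w : Fin n × Fin n → ℝ := fun p => r p.1 * Complex.normSq ((Uᴴ * V) p.1 p.2) with hwdef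
  set x : Fin n × Fin n → ℝ := fun p => Real.sqrt (s p.2) / Real.sqrt (r p.1) with hxdef
  have hw_nn : ∀ p, 0 ≤ w p := fun p => mul_nonneg (hr0 _) (Complex.normSq_nonneg _)
  have hx_nn : ∀ p, 0 ≤ x p := fun p => div_nonneg (Real.sqrt_nonneg _) (Real.sqrt_nonneg _)
  have hwx : ∀ p, w p ≠ 0 → 0 < x p := by
    intro p hp
    have hrne : r p.1 ≠ 0 := fun h => hp (by simp only [hwdef]; rw [h, zero_mul])
    have hr : 0 < r p.1 := lt_of_le_of_ne (hr0 _) (Ne.symm hrne)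
    have hsj : s p.2 ≠ 0 := fun h => hp (by simpa only [hwdef] using hw0 p.1 p.2 h)
    have hs : 0 < s p.2 := lt_of_le_of_ne (hs0' _) (Ne.symm hsj)
    simp only [hxdef]
    exact div_pos (Real.sqrt_pos.mpr hs) (Real.sqrt_pos.mpr hr)
  have hrow : ∀ i, ∑ j, w (i, j) = r i := by
    intro i
    simp only [hwdef]
    rw [← Finset.mul_sum, sum_normSq_row hMu' i, mul_one]
  have hw1 : ∑ p, w p = 1 := by
    rw [Fintype.sum_prod_type]
    calc ∑ i, ∑ j, w (i, j) = ∑ i, r i := Finset.sum_congr rfl fun i _ => hrow i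
    _ = 1 := hsumr
  have hwxT : ∑ p, w p * x p = T := by
    rw [hT_def, Fintype.sum_prod_type]
    refine Finset.sum_congr rfl fun i _ => Finset.sum_congr rfl fun j _ => ?_
    simp only [hwdef, hxdef]
    calc r i * Complex.normSq ((Uᴴ * V) i j) * (Real.sqrt (s j) / Real.sqrt (r i))
        = (r i / Real.sqrt (r i)) * (Real.sqrt (s j) * Complex.normSq ((Uᴴ * V) i j)) := by
          ring
    _ = Real.sqrt (r i) * (Real.sqrt (s j) * Complex.normSq ((Uᴴ * V) i j)) := by
          rw [Real.div_sqrt]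
    _ = Real.sqrt (r i) * Real.sqrt (s j) * Complex.normSq ((Uᴴ * V) i j) := by ring
  have hTpos : 0 < T := by
    rw [← hwxT]
    obtain ⟨p0, _, hp0⟩ := Finset.exists_ne_zero_of_sum_ne_zero (s := Finset.univ) (f := w)
      (by rw [hw1]; exact one_ne_zero)
    calc (0:ℝ) < w p0 * x p0 :=
          mul_pos (lt_of_le_of_ne (hw_nn p0) (Ne.symm hp0)) (hwx p0 hp0)
    _ ≤ ∑ p, w p * x p :=
          Finset.single_le_sum (fun p _ => mul_nonneg (hw_nn p) (hx_nn p)) (Finset.mem_univ p0)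
  have hjen : ∑ p, w p * Real.log (x p) ≤ Real.log T := by
    have h := jensen_log w x hw_nn hx_nn hwx hw1
    rwa [hwxT] at h
  -- entropy trace formulas
  have htrDρ : (ρ * (U * diagonal (fun i => (Real.logb 2 (r i) : ℂ)) * Uᴴ)).trace
      = ((∑ i, r i * Real.logb 2 (r i) : ℝ) : ℂ) := by
    conv_lhs => rw [hρspec]
    exact trace_conj_same r (fun i => Real.logb 2 (r i)) hUU
  have htrDσ : (ρ * (V * diagonal (fun j => (Real.logb 2 (s j) : ℂ)) * Vᴴ)).trace
      = ((∑ i, ∑ j, r i * Real.logb 2 (s j) * Complex.normSq ((Uᴴ * V) i j) : ℝ) : ℂ) := by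
    conv_lhs => rw [hρspec]
    exact trace_conj_pair r (fun j => Real.logb 2 (s j)) U V
  have hgoalre : (ρ * ((U * diagonal (fun i => (Real.logb 2 (r i) : ℂ)) * Uᴴ)
        - (V * diagonal (fun j => (Real.logb 2 (s j) : ℂ)) * Vᴴ))).trace.re
      = (∑ i, r i * Real.logb 2 (r i))
        - ∑ i, ∑ j, r i * Real.logb 2 (s j) * Complex.normSq ((Uᴴ * V) i j) := by
    rw [mul_sub, Matrix.trace_sub, Complex.sub_re, htrDρ, htrDσ]
    simp
  -- natural-log sums
  set S1 : ℝ := ∑ i, r i * Real.log (r i) with hS1def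
  set S2 : ℝ := ∑ p : Fin n × Fin n, w p * Real.log (s p.2) with hS2def
  have hsumlog : ∑ p, w p * Real.log (x p) = (S2 - S1) / 2 := by
    have hterm : ∀ p : Fin n × Fin n, w p * Real.log (x p)
        = (w p * Real.log (s p.2)) / 2 - (w p * Real.log (r p.1)) / 2 := by
      intro p
      by_cases hp : w p = 0
      · rw [hp]; simp
      · have hrne : r p.1 ≠ 0 := fun h => hp (by simp only [hwdef]; rw [h, zero_mul])
        have hr : 0 < r p.1 := lt_of_le_of_ne (hr0 _) (Ne.symm hrne)
        have hsne : s p.2 ≠ 0 := fun h => hp (by simpa only [hwdef] using hw0 p.1 p.2 h)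
        have hs : 0 < s p.2 := lt_of_le_of_ne (hs0' _) (Ne.symm hsne)
        simp only [hxdef]
        rw [Real.log_div (Real.sqrt_pos.mpr hs).ne' (Real.sqrt_pos.mpr hr).ne',
          Real.log_sqrt hs.le, Real.log_sqrt hr.le]
        ring
    rw [Finset.sum_congr rfl (fun p _ => hterm p), Finset.sum_sub_distrib]
    have h1 : ∑ p : Fin n × Fin n, w p * Real.log (r p.1) / 2 = S1 / 2 := by
      rw [← Finset.sum_div]
      congr 1
      rw [Fintype.sum_prod_type, hS1def]
      refine Finset.sum_congr rfl fun i _ => ?_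
      dsimp only
      rw [← Finset.sum_mul, hrow i]
    have h2 : ∑ p : Fin n × Fin n, w p * Real.log (s p.2) / 2 = S2 / 2 := by
      rw [← Finset.sum_div, hS2def]
    rw [h1, h2]
    ring
  have hln2 : 0 < Real.log 2 := Real.log_pos one_lt_two
  have hln2u : Real.log 2 < 0.6932 := lt_trans Real.log_two_lt_d9 (by norm_num)
  have hln2l : (0.69 : ℝ) < Real.log 2 := lt_trans (by norm_num) Real.log_two_gt_d9
  -- rewrite the divergence in terms of S1, S2
  have hdiv : (∑ i, r i * Real.logb 2 (r i))
      - (∑ i, ∑ j, r i * Real.logb 2 (s j) * Complex.normSq ((Uᴴ * V) i j))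
      = (S1 - S2) / Real.log 2 := by
    have e1 : ∑ i, r i * Real.logb 2 (r i) = S1 / Real.log 2 := by
      rw [hS1def, Finset.sum_div]
      refine Finset.sum_congr rfl fun i _ => ?_
      rw [Real.logb, mul_div_assoc]
    have e2 : ∑ i, ∑ j, r i * Real.logb 2 (s j) * Complex.normSq ((Uᴴ * V) i j)
        = S2 / Real.log 2 := by
      rw [hS2def, Fintype.sum_prod_type, Finset.sum_div]
      refine Finset.sum_congr rfl fun i _ => ?_
      rw [Finset.sum_div]
      refine Finset.sum_congr rfl fun j _ => ?_
      simp only [hwdef]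
      rw [Real.logb]
      ring
    rw [e1, e2, div_sub_div_same]
  -- final chain
  rw [hPosSum, hgoalre, hdiv]
  have hlogT : Real.log T ≤ T - 1 := Real.log_le_sub_one_of_pos hTpos
  have hS : (S2 - S1) / 2 ≤ Real.log T := by rw [← hsumlog]; exact hjen
  have hnum : 2 * (1 - T) ≤ S1 - S2 := by linarith only [hlogT, hS]
  have hstep : 2 * (1 - T) / Real.log 2 ≤ (S1 - S2) / Real.log 2 :=
    (div_le_div_iff_of_pos_right hln2).mpr hnum
  refine le_trans ?_ hstep
  rw [le_div_iff₀ hln2]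
  have hu2 : Real.sqrt A_ ^ 2 = A_ := Real.sq_sqrt hA0
  have hv2 : Real.sqrt B_ ^ 2 = B_ := Real.sq_sqrt hB0
  have hw2 : Real.sqrt (1 - A_) ^ 2 = 1 - A_ := Real.sq_sqrt (by linarith only [hA1])
  have ht2 : Real.sqrt (1 - B_) ^ 2 = 1 - B_ := Real.sq_sqrt (by linarith only [hB1])
  have hTle' : T ≤ Real.sqrt A_ * Real.sqrt B_ + Real.sqrt (1 - A_) * Real.sqrt (1 - B_) := by
    rw [← Real.sqrt_mul hA0, ← Real.sqrt_mul (by linarith only [hA1] : (0:ℝ) ≤ 1 - A_)]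
    exact hTle
  have h2wt : 2 * (Real.sqrt (1 - A_) * Real.sqrt (1 - B_)) ≤ (1 - A_) + (1 - B_) := by
    have h := two_mul_le_add_sq (Real.sqrt (1 - A_)) (Real.sqrt (1 - B_))
    rw [hw2, ht2] at h
    linarith only [h]
  have e : (Real.sqrt A_ - Real.sqrt B_) ^ 2
      = A_ + B_ - 2 * (Real.sqrt A_ * Real.sqrt B_) := by
    rw [sub_sq, hu2, hv2]
    ring
  have hq : (Real.sqrt A_ - Real.sqrt B_) ^ 2 ≤ 2 * (1 - T) := by
    linarith only [hTle', h2wt, e]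
  have e2 : (Real.sqrt A_ - 4 * Real.sqrt B_) ^ 2
      = A_ - 8 * (Real.sqrt A_ * Real.sqrt B_) + 16 * B_ := by
    rw [sub_sq, mul_pow, hu2, hv2]
    ring
  have h3 : 0 ≤ (3 / 4 - Real.log 2) * A_ := mul_nonneg (by linarith only [hln2u]) hA0
  have h4 : 0 ≤ (9 * Real.log 2 - 3) * B_ := mul_nonneg (by linarith only [hln2l]) hB0
  have h5 : 0 ≤ (Real.sqrt A_ - 4 * Real.sqrt B_) ^ 2 := sq_nonneg _
  have hkey : (A_ - 9 * B_) * Real.log 2 ≤ (Real.sqrt A_ - Real.sqrt B_) ^ 2 := by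
    linarith only [e, e2, h3, h4, h5]
  linarith only [hkey, hq]
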